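/- arXiv:2207.02535 — 3 statements merged into one kernel-verified Lean document; each statement's English description precedes it below -/
import Mathlib

section
/- Let C be a linear code in F_q^n and let e be an integer with 0 ≤ e ≤ h. Then C is e-Galois LCD if and only if C is (h−e)-Galois LCD, i.e., C ∩ C^{⊥_e} = {0} if and only if C ∩ C^{⊥_{h−e}} = {0}. -/
open Finset

variable {F : Type*}

/-- The `e`-Galois dual of a linear code `C ⊆ F_q^n` (`q = p^h`):
`C^{⊥_e} = {x | ∀ c ∈ C, ∑ i, x i * (c i)^(p^e) = 0}`. -/
def galoisDual [Field F] (p e : ℕ) {n : ℕ} (C : Submodule F (Fin n → F)) :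
    Submodule F (Fin n → F) where
  carrier := {x | ∀ c ∈ C, ∑ i, x i * c i ^ p ^ e = 0}
  add_mem' := by
    intro a b ha hb c hc
    have h1 := ha c hc
    have h2 := hb c hc
    show ∑ i, (a + b) i * c i ^ p ^ e = 0
    simp only [Pi.add_apply, add_mul, Finset.sum_add_distrib, h1, h2, add_zero]
  zero_mem' := by
    intro c hc
    simp
  smul_mem' := by
    intro r a ha c hc
    have h1 := ha c hc
    show ∑ i, (r • a) i * c i ^ p ^ e = 0
    simp only [Pi.smul_apply, smul_eq_mul, mul_assoc, ← Finset.mul_sum, h1, mul_zero]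

/-- The `e`-Galois hull of `C`: `Hull_e(C) = C ∩ C^{⊥_e}`. -/
def galoisHull [Field F] (p e : ℕ) {n : ℕ} (C : Submodule F (Fin n → F)) :
    Submodule F (Fin n → F) :=
  C ⊓ galoisDual p e C

/-- `G` is a generator matrix of `C`: its rows form a basis of `C`. -/
def IsGenMatrix [Field F] {n k : ℕ} (C : Submodule F (Fin n → F))
    (G : Matrix (Fin k) (Fin n) F) : Prop :=
  LinearIndependent F (fun i : Fin k => G i) ∧
    Submodule.span F (Set.range fun i : Fin k => G i) = C

/-- `d` is the minimum (Hamming) distance of the linear code `C`. -/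
def IsMinDist [Field F] [DecidableEq F] {n : ℕ} (C : Submodule F (Fin n → F)) (d : ℕ) : Prop :=
  (∃ c ∈ C, c ≠ 0 ∧ hammingNorm c = d) ∧ ∀ c ∈ C, c ≠ 0 → d ≤ hammingNorm c


open LinearMap Matrix in
private lemma sepLeft_iff_sepRight {k V : Type*} [Field k] [AddCommGroup V] [Module k V]
    [FiniteDimensional k V] (B : V →ₗ[k] V →ₗ[k] k) :
    B.SeparatingLeft ↔ B.SeparatingRight := by
  classical
  rw [← LinearMap.flip_separatingLeft]
  let b := Module.finBasis k V
  rw [LinearMap.separatingLeft_iff_det_ne_zero b, LinearMap.separatingLeft_iff_det_ne_zero b]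
  have h : LinearMap.toMatrix₂ b b B.flip = (LinearMap.toMatrix₂ b b B)ᵀ := by
    ext i j
    simp [LinearMap.toMatrix₂_apply, Matrix.transpose_apply, LinearMap.flip_apply]
  rw [h, Matrix.det_transpose]

/-- Theorem: `C` is `e`-Galois LCD iff `C` is `(h-e)`-Galois LCD,
i.e. `C ∩ C^{⊥_e} = {0}` iff `C ∩ C^{⊥_{h-e}} = {0}`. -/
theorem galois_LCD_iff
    (p h : ℕ) (hp : p.Prime) (hh : 0 < h)
    [Field F] [Fintype F] (hcard : Fintype.card F = p ^ h)
    (n e : ℕ) (he : e ≤ h)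
    (C : Submodule F (Fin n → F)) :
    galoisHull p e C = ⊥ ↔ galoisHull p (h - e) C = ⊥ := by
    classical
  haveI hfact := Fact.mk hp
  haveI hchar : CharP F p := by
    have h0 : (p : F) ^ h = 0 := by
      have hc := Nat.cast_card_eq_zero F
      rw [hcard, Nat.cast_pow] at hc
      exact hc
    exact (CharP.charP_iff_prime_eq_zero hp).mpr ((pow_eq_zero_iff hh.ne').mp h0)
  letI : Algebra (ZMod p) F := ZMod.algebra _ _
  haveI : FiniteDimensional (ZMod p) (Fin n → F) := Module.Finite.of_finite
  haveI : FiniteDimensional (ZMod p) F := Module.Finite.of_finite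
  -- every element of F is fixed by x ↦ x ^ p ^ h
  have hpowh : ∀ a : F, a ^ p ^ h = a := by
    intro a
    have := FiniteField.pow_card a
    rwa [hcard] at this
  -- x ↦ x ^ p ^ e is surjective on F
  have hsurj : ∀ t : F, ∃ s : F, s ^ p ^ e = t := by
    intro t
    refine ⟨t ^ p ^ (h - e), ?_⟩
    rw [← pow_mul, ← pow_add, Nat.sub_add_cancel he, hpowh]
  -- the key Frobenius computation
  have hfrob : ∀ x c : Fin n → F,
      (∑ i, c i * x i ^ p ^ e) ^ p ^ (h - e) = ∑ i, x i * c i ^ p ^ (h - e) := by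
    intro x c
    calc (∑ i, c i * x i ^ p ^ e) ^ p ^ (h - e)
        = iterateFrobenius F p (h - e) (∑ i, c i * x i ^ p ^ e) := by
          rw [iterateFrobenius_def]
      _ = ∑ i, iterateFrobenius F p (h - e) (c i * x i ^ p ^ e) := map_sum _ _ _
      _ = ∑ i, x i * c i ^ p ^ (h - e) := by
          refine Finset.sum_congr rfl fun i _ => ?_
          rw [iterateFrobenius_def, mul_pow, ← pow_mul, ← pow_add,
            Nat.add_sub_cancel' he, hpowh, mul_comm]
  have hiff : ∀ x c : Fin n → F,
      (∑ i, x i * c i ^ p ^ (h - e) = 0) ↔ (∑ i, c i * x i ^ p ^ e = 0) := by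
    intro x c
    rw [← hfrob x c, pow_eq_zero_iff (pow_ne_zero _ hp.ne_zero)]
  -- scalars from ZMod p are fixed by x ↦ x ^ p ^ e
  have halg : ∀ (r : ZMod p) (a : F), (r • a) ^ p ^ e = r • a ^ p ^ e := by
    intro r a
    rw [Algebra.smul_def, Algebra.smul_def, mul_pow, ← map_pow, ZMod.pow_card_pow]
  -- a nonzero (ZMod p)-linear functional on F
  have hrankpos : 0 < Module.finrank (ZMod p) F := Module.finrank_pos
  set bF := Module.finBasis (ZMod p) F with hbF
  set lam : F →ₗ[ZMod p] ZMod p := bF.coord ⟨0, hrankpos⟩ with hlamdef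
  have hlam1 : lam (bF ⟨0, hrankpos⟩) = 1 := by
    simp [hlamdef, Module.Basis.coord_apply]
  have hlam : ∀ a : F, (∀ t : F, lam (t * a) = 0) → a = 0 := by
    intro a ha
    by_contra h0
    have := ha (bF ⟨0, hrankpos⟩ * a⁻¹)
    rw [mul_assoc, inv_mul_cancel₀ h0, mul_one, hlam1] at this
    exact one_ne_zero this
  -- scaling identities
  have hscaleR : ∀ (s : F) (x c : Fin n → F),
      (∑ i, x i * (s • c) i ^ p ^ e) = s ^ p ^ e * ∑ i, x i * c i ^ p ^ e := by
    intro s x c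
    rw [Finset.mul_sum]
    refine Finset.sum_congr rfl fun i _ => ?_
    simp only [Pi.smul_apply, smul_eq_mul, mul_pow]
    ring
  have hscaleL : ∀ (s : F) (x c : Fin n → F),
      (∑ i, (s • x) i * c i ^ p ^ e) = s * ∑ i, x i * c i ^ p ^ e := by
    intro s x c
    rw [Finset.mul_sum]
    refine Finset.sum_congr rfl fun i _ => ?_
    simp only [Pi.smul_apply, smul_eq_mul]
    ring
  -- the (ZMod p)-bilinear form on C
  set V := C.restrictScalars (ZMod p) with hV
  let Bpre : V →ₗ[ZMod p] V →ₗ[ZMod p] F :=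
    { toFun := fun x =>
        { toFun := fun c => ∑ i, (x : Fin n → F) i * (c : Fin n → F) i ^ p ^ e
          map_add' := by
            intro c c'
            rw [← Finset.sum_add_distrib]
            refine Finset.sum_congr rfl fun i _ => ?_
            simp only [Submodule.coe_add, Pi.add_apply]
            rw [add_pow_char_pow, mul_add]
          map_smul' := by
            intro r c
            simp only [RingHom.id_apply]
            rw [Finset.smul_sum]
            refine Finset.sum_congr rfl fun i _ => ?_
            simp only [SetLike.val_smul, Pi.smul_apply]
            rw [halg, mul_smul_comm] }
      map_add' := by
        intro x x'
        ext c
        simp only [LinearMap.coe_mk, AddHom.coe_mk, LinearMap.add_apply]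
        rw [← Finset.sum_add_distrib]
        refine Finset.sum_congr rfl fun i _ => ?_
        simp only [Submodule.coe_add, Pi.add_apply]
        rw [add_mul]
      map_smul' := by
        intro r x
        ext c
        simp only [LinearMap.coe_mk, AddHom.coe_mk, RingHom.id_apply, LinearMap.smul_apply]
        rw [Finset.smul_sum]
        refine Finset.sum_congr rfl fun i _ => ?_
        simp only [SetLike.val_smul, Pi.smul_apply]
        rw [smul_mul_assoc] }
  let B : V →ₗ[ZMod p] V →ₗ[ZMod p] ZMod p := Bpre.compr₂ lam
  have hB : ∀ (x c : V), B x c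
      = lam (∑ i, (x : Fin n → F) i * (c : Fin n → F) i ^ p ^ e) := fun x c => rfl
  -- left separation ↔ e-hull trivial
  have hL : (galoisHull p e C = ⊥) ↔ B.SeparatingLeft := by
    rw [Submodule.eq_bot_iff]
    constructor
    · intro hbot x hx
      have hx0 : (x : Fin n → F) = 0 := by
        refine hbot x ⟨x.2, ?_⟩
        intro c hc
        refine hlam _ fun t => ?_
        obtain ⟨s, hs⟩ := hsurj t
        have := hx ⟨s • c, Submodule.smul_mem C s hc⟩
        rw [hB] at this
        rw [← hs, ← hscaleR s (x : Fin n → F) c]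
        exact this
      exact Subtype.ext hx0
    · intro hsep x hx
      obtain ⟨hxC, hxd⟩ := hx
      have := hsep ⟨x, hxC⟩ (fun c => by
        rw [hB]
        rw [hxd (c : Fin n → F) c.2]
        exact map_zero lam)
      exact congrArg Subtype.val this
  -- right separation ↔ (h-e)-hull trivial
  have hR : (galoisHull p (h - e) C = ⊥) ↔ B.SeparatingRight := by
    rw [Submodule.eq_bot_iff]
    constructor
    · intro hbot x hx
      have hx0 : (x : Fin n → F) = 0 := by
        refine hbot x ⟨x.2, ?_⟩
        intro c hc
        refine (hiff _ _).mpr (hlam _ fun t => ?_)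
        have := hx ⟨t • c, Submodule.smul_mem C t hc⟩
        rw [hB] at this
        rw [← hscaleL t c (x : Fin n → F)]
        exact this
      exact Subtype.ext hx0
    · intro hsep x hx
      obtain ⟨hxC, hxd⟩ := hx
      have := hsep ⟨x, hxC⟩ (fun c => by
        rw [hB]
        rw [(hiff (x : Fin n → F) (c : Fin n → F)).mp (hxd (c : Fin n → F) c.2)]
        exact map_zero lam)
      exact congrArg Subtype.val this
  rw [hL, hR]
  exact sepLeft_iff_sepRight B
end

section
/- Let C be a k-dimensional linear code in F_q^n, let 0 ≤ e ≤ h−1, and let G be any generator matrix of C. Then the following four statements are equivalent: (1) C is e-Galois LCD; (2) C is (h−e)-Galois LCD; (3) the k×k matrix G·σ^e(G^T) is nonsingular; (4) the k×k matrix G·σ^{h−e}(G^T) is nonsingular. -/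
open Finset

variable {F : Type*}

open Matrix

section Aux

variable [Field F]

private lemma dual_sum_eq (p : ℕ) [ExpChar F p] (e : ℕ) {n k : ℕ}
    (G : Matrix (Fin k) (Fin n) F) (x : Fin n → F) (z : Fin k → F) :
    ∑ j, x j * (∑ i, z i • G i) j ^ p ^ e
      = ∑ i, (z i) ^ p ^ e * ∑ j, x j * (G i j) ^ p ^ e := by
  simp only [Finset.sum_apply, Pi.smul_apply, smul_eq_mul]
  calc ∑ j, x j * (∑ i, z i * G i j) ^ p ^ e
      = ∑ j, x j * ∑ i, (z i) ^ p ^ e * (G i j) ^ p ^ e := by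
        refine Finset.sum_congr rfl fun j _ => ?_
        congr 1
        simp only [← iterateFrobenius_def (R := F) (p := p), map_sum, _root_.map_mul]
    _ = ∑ i, (z i) ^ p ^ e * ∑ j, x j * (G i j) ^ p ^ e := by
        simp_rw [Finset.mul_sum]
        rw [Finset.sum_comm]
        exact Finset.sum_congr rfl fun i _ => Finset.sum_congr rfl fun j _ => by ring

private lemma vecMul_gram_apply (p : ℕ) (e : ℕ) {n k : ℕ}
    (G : Matrix (Fin k) (Fin n) F) (y : Fin k → F) (i : Fin k) :
    (y ᵥ* (G * (G.transpose.map fun a => a ^ p ^ e))) i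
      = ∑ j, (y ᵥ* G) j * (G i j) ^ p ^ e := by
  rw [← Matrix.vecMul_vecMul]
  simp [Matrix.vecMul, dotProduct, Matrix.map_apply, Matrix.transpose_apply]

private lemma vecMul_eq_sum_smul {n k : ℕ} (G : Matrix (Fin k) (Fin n) F) (y : Fin k → F) :
    y ᵥ* G = ∑ i, y i • G i := by
  ext j
  simp [Matrix.vecMul, dotProduct, Finset.sum_apply]

/-- Key lemma: the `e`-Galois hull of `C` is trivial iff `G·σ^e(Gᵀ)` is nonsingular. -/
private lemma galoisHull_eq_bot_iff (p : ℕ) [ExpChar F p] (e : ℕ) {n k : ℕ}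
    (C : Submodule F (Fin n → F)) (G : Matrix (Fin k) (Fin n) F) (hG : IsGenMatrix C G) :
    galoisHull p e C = ⊥ ↔ IsUnit (G * (G.transpose.map fun a => a ^ p ^ e)) := by
  classical
  obtain ⟨hind, hspan⟩ := hG
  set M := G * (G.transpose.map fun a => a ^ p ^ e) with hM
  constructor
  · intro hbot
    by_contra hMu
    have hdet : M.det = 0 := by
      by_contra hd
      exact hMu ((Matrix.isUnit_iff_isUnit_det M).mpr (isUnit_iff_ne_zero.mpr hd))
    obtain ⟨y, hy0, hyM⟩ := Matrix.exists_vecMul_eq_zero_iff.mpr hdet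
    set x := y ᵥ* G with hx
    have hxC : x ∈ C := by
      rw [← hspan]
      rw [Submodule.mem_span_range_iff_exists_fun]
      exact ⟨y, (vecMul_eq_sum_smul G y).symm⟩
    have hx0 : x ≠ 0 := by
      intro h0
      apply hy0
      have := (Fintype.linearIndependent_iff.mp hind) y
        (by rw [← vecMul_eq_sum_smul, ← hx, h0])
      funext i; exact this i
    have hxD : x ∈ galoisDual p e C := by
      intro c hc
      rw [← hspan, Submodule.mem_span_range_iff_exists_fun] at hc
      obtain ⟨z, rfl⟩ := hc
      rw [dual_sum_eq p e G x z]
      have hterm : ∀ i, ∑ j, x j * (G i j) ^ p ^ e = 0 := by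
        intro i
        have := congrFun hyM i
        rwa [vecMul_gram_apply p e G y i] at this
      simp [hterm]
    have : x ∈ galoisHull p e C := ⟨hxC, hxD⟩
    rw [hbot] at this
    exact hx0 this
  · intro hMu
    rw [Submodule.eq_bot_iff]
    rintro x ⟨hxC, hxD⟩
    rw [SetLike.mem_coe, ← hspan, Submodule.mem_span_range_iff_exists_fun] at hxC
    obtain ⟨y, hy⟩ := hxC
    have hrow : ∀ i : Fin k, G i ∈ C := by
      intro i
      rw [← hspan]
      exact Submodule.subset_span ⟨i, rfl⟩
    have hyM : y ᵥ* M = 0 := by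
      funext i
      rw [vecMul_gram_apply p e G y i]
      have := hxD (G i) (hrow i)
      rw [vecMul_eq_sum_smul, hy]
      simpa using this
    have hy0 : y = 0 := by
      have hinj := Matrix.vecMul_injective_iff_isUnit.mpr hMu
      apply hinj
      show y ᵥ* M = (0 : Fin k → F) ᵥ* M
      rw [hyM, Matrix.zero_vecMul]
    rw [← hy, hy0]
    simp

/-- Swapping lemma relating the `e`-Gram matrix and the `f`-Gram matrix when `e + f = h`. -/
private lemma gram_swap (p : ℕ) [ExpChar F p] {n k : ℕ} (G : Matrix (Fin k) (Fin n) F)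
    (e f h : ℕ) (hef : e + f = h) (hq : ∀ a : F, a ^ p ^ h = a) :
    G * (G.transpose.map fun a => a ^ p ^ f)
      = ((G * (G.transpose.map fun a => a ^ p ^ e)).transpose).map fun a => a ^ p ^ f := by
  ext i j
  simp only [Matrix.map_apply, Matrix.transpose_apply, Matrix.mul_apply]
  rw [show (∑ l, G j l * (G i l) ^ p ^ e) ^ p ^ f
      = ∑ l, (G j l * (G i l) ^ p ^ e) ^ p ^ f by
    simp only [← iterateFrobenius_def (R := F) (p := p), map_sum]]
  refine Finset.sum_congr rfl fun l _ => ?_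
  rw [mul_pow, ← pow_mul, ← pow_add, hef, hq, mul_comm]

private lemma isUnit_gram_swap (p : ℕ) [ExpChar F p] {n k : ℕ} (G : Matrix (Fin k) (Fin n) F)
    (e f h : ℕ) (hef : e + f = h) (hq : ∀ a : F, a ^ p ^ h = a)
    (hu : IsUnit (G * (G.transpose.map fun a => a ^ p ^ e))) :
    IsUnit (G * (G.transpose.map fun a => a ^ p ^ f)) := by
  rw [gram_swap p G e f h hef hq]
  have h1 : IsUnit (G * (G.transpose.map fun a => a ^ p ^ e)).transpose :=
    (Matrix.isUnit_transpose _).mpr hu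
  have h2 := h1.map (RingHom.mapMatrix (iterateFrobenius F p f))
  rwa [RingHom.mapMatrix_apply] at h2

end Aux

/-- Corollary: for any generator matrix `G` of the `k`-dimensional code `C`, the following are
equivalent: (1) `C` is `e`-Galois LCD; (2) `C` is `(h-e)`-Galois LCD;
(3) `G·σ^e(Gᵀ)` is nonsingular; (4) `G·σ^{h-e}(Gᵀ)` is nonsingular. -/
theorem galois_LCD_tfae
    (p h : ℕ) (hp : p.Prime) (hh : 0 < h)
    [Field F] [Fintype F] (hcard : Fintype.card F = p ^ h)
    (n k e : ℕ) (he : e ≤ h - 1)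
    (C : Submodule F (Fin n → F)) (hk : Module.finrank F C = k)
    (G : Matrix (Fin k) (Fin n) F) (hG : IsGenMatrix C G) :
    List.TFAE
      [galoisHull p e C = ⊥,
       galoisHull p (h - e) C = ⊥,
       IsUnit (G * (G.transpose.map fun a => a ^ p ^ e)),
       IsUnit (G * (G.transpose.map fun a => a ^ p ^ (h - e)))] := by
  haveI : Fact p.Prime := ⟨hp⟩
  have hpF : (p : F) = 0 := by
    have h1 : ((p ^ h : ℕ) : F) = 0 := by
      rw [← hcard]; exact FiniteField.cast_card_eq_zero F
    rw [Nat.cast_pow] at h1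
    exact pow_eq_zero_iff hh.ne' |>.mp h1
  haveI : CharP F p := by
    have hrc := CharP.ringChar_of_prime_eq_zero hp hpF
    rw [← hrc]
    exact ringChar.charP F
  haveI : ExpChar F p := inferInstance
  have hq : ∀ a : F, a ^ p ^ h = a := fun a => by
    rw [← hcard]; exact FiniteField.pow_card a
  have heh : e ≤ h := le_trans he (Nat.sub_le h 1)
  have hef : e + (h - e) = h := Nat.add_sub_cancel' heh
  have hfe : (h - e) + e = h := by omega
  tfae_have 1 ↔ 3 := galoisHull_eq_bot_iff p e C G hG
  tfae_have 2 ↔ 4 := galoisHull_eq_bot_iff p (h - e) C G hG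
  tfae_have 3 → 4 := isUnit_gram_swap p G e (h - e) h hef hq
  tfae_have 4 → 3 := isUnit_gram_swap p G (h - e) e h hfe hq
  tfae_finish
end

section
/- Let C be a k-dimensional linear code in F_q^n, let 0 ≤ e ≤ h−1, and let G be any generator matrix and H be any parity check matrix of C. Then the following six statements are equivalent: (1) C is e-Galois self-dual; (2) C is (h−e)-Galois self-dual; (3) both G·σ^e(G^T) and σ^{h−e}(H)·σ^{2h−2e}(H^T) are zero matrices; (4) both G·σ^e(G^T) and σ^{h−e}(H)·H^T are zero matrices; (5) both G·σ^{h−e}(G^T) and σ^{h−e}(H)·σ^{2h−2e}(H^T) are zero matrices; (6) both G·σ^{h−e}(G^T) and σ^{h−e}(H)·H^T are zero matrices. -/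
open Finset

variable {F : Type*}

section GaloisAux2

variable [Field F] [Fintype F] {p h : ℕ}

lemma galois_charP (hp : p.Prime) (hh : 0 < h) (hcard : Fintype.card F = p ^ h) :
    CharP F p := by
  haveI := ringChar.charP F
  obtain ⟨m, hrp, hc⟩ := FiniteField.card F (ringChar F)
  have hdvd : p ∣ ringChar F := by
    have : p ∣ ringChar F ^ (m : ℕ) := by
      rw [← hc, hcard]
      exact dvd_pow_self p hh.ne'
    exact hp.dvd_of_dvd_pow this
  have : p = ringChar F := ((Nat.prime_dvd_prime_iff_eq hp hrp).mp hdvd)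
  rw [this]
  infer_instance

lemma galois_frob_sum (hp : p.Prime) (hh : 0 < h) (hcard : Fintype.card F = p ^ h)
    (t : ℕ) {ι : Type*} (s : Finset ι) (f : ι → F) (hf : ∑ i ∈ s, f i = 0) :
    ∑ i ∈ s, f i ^ p ^ t = 0 := by
  haveI : Fact p.Prime := ⟨hp⟩
  haveI := galois_charP hp hh hcard
  have h2 : (∑ i ∈ s, f i) ^ p ^ t = ∑ i ∈ s, f i ^ p ^ t := by
    have h3 := map_sum (iterateFrobenius F p t) f s
    simp only [iterateFrobenius_def] at h3
    exact h3
  rw [← h2, hf, zero_pow (pow_ne_zero t hp.ne_zero)]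

lemma galois_pow_h (hcard : Fintype.card F = p ^ h) (a : F) : a ^ p ^ h = a := by
  rw [← hcard]; exact FiniteField.pow_card a

lemma galois_swap_sum (hp : p.Prime) (hh : 0 < h) (hcard : Fintype.card F = p ^ h)
    {e : ℕ} (he : e ≤ h) {ι : Type*} (s : Finset ι) (x y : ι → F)
    (hxy : ∑ i ∈ s, x i * y i ^ p ^ e = 0) :
    ∑ i ∈ s, y i * x i ^ p ^ (h - e) = 0 := by
  have key : ∀ a b : F, (a * b ^ p ^ e) ^ p ^ (h - e) = b * a ^ p ^ (h - e) := by
    intro a b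
    rw [mul_pow, ← pow_mul, ← pow_add, Nat.add_sub_cancel' he, galois_pow_h hcard,
      mul_comm]
  have := galois_frob_sum hp hh hcard (h - e) s _ hxy
  calc ∑ i ∈ s, y i * x i ^ p ^ (h - e)
      = ∑ i ∈ s, (x i * y i ^ p ^ e) ^ p ^ (h - e) :=
        Finset.sum_congr rfl fun i _ => (key (x i) (y i)).symm
    _ = 0 := this

lemma galois_dual_rows (hp : p.Prime) (hh : 0 < h) (hcard : Fintype.card F = p ^ h)
    {n k : ℕ} {C : Submodule F (Fin n → F)} {M : Matrix (Fin k) (Fin n) F}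
    (hM : Submodule.span F (Set.range fun i : Fin k => M i) = C) (e : ℕ) (x : Fin n → F) :
    x ∈ galoisDual p e C ↔ ∀ j, ∑ i, x i * M j i ^ p ^ e = 0 := by
  haveI : Fact p.Prime := ⟨hp⟩
  haveI := galois_charP hp hh hcard
  constructor
  · intro hx j
    exact hx (M j) (hM ▸ Submodule.subset_span ⟨j, rfl⟩)
  · intro hx c hc
    rw [← hM] at hc
    induction hc using Submodule.span_induction with
    | mem c hc => obtain ⟨j, rfl⟩ := hc; exact hx j
    | zero => simp [zero_pow (pow_ne_zero e hp.ne_zero)]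
    | add a b _ _ ha hb =>
        simp only [Pi.add_apply, add_pow_char_pow, mul_add, Finset.sum_add_distrib, ha, hb,
          add_zero]
    | smul r a _ ha =>
        simp only [Pi.smul_apply, smul_eq_mul, mul_pow]
        calc ∑ i, x i * (r ^ p ^ e * a i ^ p ^ e)
            = r ^ p ^ e * ∑ i, x i * a i ^ p ^ e := by
              rw [Finset.mul_sum]; exact Finset.sum_congr rfl fun i _ => by ring
          _ = 0 := by rw [ha, mul_zero]

lemma galois_le_dual_iff (hp : p.Prime) (hh : 0 < h) (hcard : Fintype.card F = p ^ h)
    {n a b : ℕ} {X Y : Submodule F (Fin n → F)}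
    {A : Matrix (Fin a) (Fin n) F} {B : Matrix (Fin b) (Fin n) F}
    (hA : Submodule.span F (Set.range fun i : Fin a => A i) = X)
    (hB : Submodule.span F (Set.range fun i : Fin b => B i) = Y) (e : ℕ) :
    X ≤ galoisDual p e Y ↔ A * (B.transpose.map fun x => x ^ p ^ e) = 0 := by
  rw [← hA, Submodule.span_le]
  constructor
  · intro hle
    ext i j
    have h1 := (galois_dual_rows hp hh hcard hB e (A i)).mp (hle (Set.mem_range_self i)) j
    simpa [Matrix.mul_apply] using h1
  · intro hAB
    rintro _ ⟨i, rfl⟩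
    rw [SetLike.mem_coe, galois_dual_rows hp hh hcard hB e]
    intro j
    have h1 := congrFun (congrFun hAB i) j
    simpa [Matrix.mul_apply] using h1

end GaloisAux2

section GaloisAux3

variable [Field F] [Fintype F] {p h : ℕ}

lemma galois_indep_frob (hp : p.Prime) (hh : 0 < h) (hcard : Fintype.card F = p ^ h)
    {t : ℕ} (ht : t ≤ h) {m n : ℕ} {v : Fin m → Fin n → F}
    (hv : LinearIndependent F v) :
    LinearIndependent F (fun i => fun j => v i j ^ p ^ t) := by
  rw [linearIndependent_iff'] at hv ⊢
  intro s g hg i hi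
  have hg' : ∀ j, ∑ i ∈ s, g i * v i j ^ p ^ t = 0 := by
    intro j
    have := congrFun hg j
    simpa [Finset.sum_apply] using this
  have h2 : ∑ i ∈ s, (g i ^ p ^ (h - t)) • v i = 0 := by
    funext j
    have h3 := galois_swap_sum hp hh hcard ht s g (fun i => v i j) (hg' j)
    simp only [Finset.sum_apply, Pi.smul_apply, smul_eq_mul, Pi.zero_apply]
    rw [← h3]
    exact Finset.sum_congr rfl fun i _ => mul_comm _ _
  have h4 := hv s _ h2 i hi
  exact pow_eq_zero_iff (pow_ne_zero (h - t) hp.ne_zero) |>.mp h4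

lemma galois_finrank_dual (hp : p.Prime) (hh : 0 < h) (hcard : Fintype.card F = p ^ h)
    {e : ℕ} (he : e ≤ h) {n k : ℕ} {C : Submodule F (Fin n → F)}
    (G : Matrix (Fin k) (Fin n) F) (hG : IsGenMatrix C G) :
    Module.finrank F (galoisDual p e C) = n - k := by
  classical
  set M : Matrix (Fin k) (Fin n) F := G.map (fun a => a ^ p ^ e) with hM
  have hker : galoisDual p e C = LinearMap.ker M.mulVecLin := by
    ext x
    rw [LinearMap.mem_ker, galois_dual_rows hp hh hcard hG.2 e x]
    have hmv : M.mulVecLin x = fun j => ∑ i, x i * G j i ^ p ^ e := by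
      funext j
      simp [Matrix.mulVecLin_apply, Matrix.mulVec, dotProduct, hM, mul_comm]
    rw [hmv, funext_iff]
    simp
  have h1 := LinearMap.finrank_range_add_finrank_ker M.mulVecLin
  have hrank : Module.finrank F (LinearMap.range M.mulVecLin) = k := by
    have hr : M.rank = k := by
      rw [← Matrix.rank_transpose, Matrix.rank, Matrix.range_mulVecLin]
      change Module.finrank F (Submodule.span F (Set.range fun i : Fin k => M i)) = k
      have hi : LinearIndependent F (fun i : Fin k => M i) :=
        galois_indep_frob hp hh hcard he hG.1
      rw [finrank_span_eq_card hi, Fintype.card_fin]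
    exact hr
  have hn : Module.finrank F (Fin n → F) = n := Module.finrank_fin_fun F
  rw [hker]
  omega

end GaloisAux3

section GaloisAux4

variable [Field F] [Fintype F] {p h : ℕ}

lemma galois_le_dual_swap (hp : p.Prime) (hh : 0 < h) (hcard : Fintype.card F = p ^ h)
    {e : ℕ} (he : e ≤ h) {n : ℕ} {X Y : Submodule F (Fin n → F)}
    (hXY : X ≤ galoisDual p e Y) : Y ≤ galoisDual p (h - e) X := by
  intro y hy x hx
  exact galois_swap_sum hp hh hcard he univ x y (hXY hx y hy)

lemma galois_selfdual_iff (hp : p.Prime) (hh : 0 < h) (hcard : Fintype.card F = p ^ h)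
    {e : ℕ} (he : e ≤ h) {n k : ℕ} {C : Submodule F (Fin n → F)}
    (hk : Module.finrank F C = k)
    (G : Matrix (Fin k) (Fin n) F) (hG : IsGenMatrix C G)
    (H : Matrix (Fin (n - k)) (Fin n) F) (hH : IsGenMatrix (galoisDual p 0 C) H) :
    C = galoisDual p e C ↔
      (C ≤ galoisDual p e C ∧
        galoisDual p 0 C ≤ galoisDual p (h - e) (galoisDual p 0 C)) := by
  constructor
  · intro hCe
    refine ⟨hCe.le, ?_⟩
    have hswap : C ≤ galoisDual p (h - e) C := galois_le_dual_swap hp hh hcard he hCe.le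
    intro d hd d' hd'
    set c : Fin n → F := fun i => d i ^ p ^ e with hc
    set c' : Fin n → F := fun i => d' i ^ p ^ e with hc'
    have hmem : ∀ (w : Fin n → F), w ∈ galoisDual p 0 C →
        (fun i => w i ^ p ^ e) ∈ C := by
      intro w hw
      rw [hCe]
      intro y hy
      have h0 : ∑ i, w i * y i = 0 := by simpa using hw y hy
      have h1 := galois_frob_sum hp hh hcard e univ (fun i => w i * y i) h0
      simpa [mul_pow] using h1
    have hcC : c ∈ C := hmem d hd
    have hc'C : c' ∈ C := hmem d' hd'
    have hsum : ∑ i, c i * c' i ^ p ^ (h - e) = 0 := hswap hcC c' hc'C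
    have h2 := galois_frob_sum hp hh hcard (h - e) univ _ hsum
    have hcd : ∀ i, c i ^ p ^ (h - e) = d i := by
      intro i
      rw [hc]
      rw [← pow_mul, ← pow_add, Nat.add_sub_cancel' he, galois_pow_h hcard]
    have hcd' : ∀ i, c' i ^ p ^ (h - e) = d' i := by
      intro i
      rw [hc']
      rw [← pow_mul, ← pow_add, Nat.add_sub_cancel' he, galois_pow_h hcard]
    calc ∑ i, d i * d' i ^ p ^ (h - e)
        = ∑ i, (c i * c' i ^ p ^ (h - e)) ^ p ^ (h - e) := by
          refine Finset.sum_congr rfl fun i _ => ?_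
          rw [mul_pow, hcd i, hcd' i]
      _ = 0 := h2
  · rintro ⟨h1, h2⟩
    have hd1 : Module.finrank F (galoisDual p e C) = n - k :=
      galois_finrank_dual hp hh hcard he G hG
    have hd0 : Module.finrank F (galoisDual p 0 C) = n - k :=
      galois_finrank_dual hp hh hcard (Nat.zero_le h) G hG
    have hd2 : Module.finrank F (galoisDual p (h - e) (galoisDual p 0 C)) = n - (n - k) :=
      galois_finrank_dual hp hh hcard (Nat.sub_le h e) H hH
    have hkn : k ≤ n := by
      rw [← hk]
      have h3 := Submodule.finrank_le C
      rwa [Module.finrank_fin_fun] at h3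
    have l1 : k ≤ n - k := by
      have := Submodule.finrank_mono h1
      rwa [hk, hd1] at this
    have l2 : n - k ≤ n - (n - k) := by
      have := Submodule.finrank_mono h2
      rwa [hd0, hd2] at this
    have hle : n - k ≤ k := by omega
    exact Submodule.eq_of_le_of_finrank_le h1 (by rw [hd1, hk]; exact hle)

lemma galois_map_mul_zero_iff (hp : p.Prime) (hh : 0 < h) (hcard : Fintype.card F = p ^ h)
    (t : ℕ) {a b c : ℕ} (A : Matrix (Fin a) (Fin b) F) (B : Matrix (Fin b) (Fin c) F) :
    (A.map fun x => x ^ p ^ t) * (B.map fun x => x ^ p ^ t) = 0 ↔ A * B = 0 := by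
  haveI : Fact p.Prime := ⟨hp⟩
  haveI := galois_charP hp hh hcard
  have hfun : ⇑(iterateFrobenius F p t) = fun x : F => x ^ p ^ t :=
    funext fun x => rfl
  have hmap : (A.map fun x => x ^ p ^ t) * (B.map fun x => x ^ p ^ t)
      = (A * B).map fun x => x ^ p ^ t := by
    rw [← hfun, Matrix.map_mul]
  rw [hmap]
  constructor
  · intro hz
    ext i j
    have := congrFun (congrFun hz i) j
    simp only [Matrix.map_apply, Matrix.zero_apply] at this ⊢
    exact pow_eq_zero_iff (pow_ne_zero t hp.ne_zero) |>.mp this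
  · intro hz
    rw [hz]
    ext i j
    simp [zero_pow (pow_ne_zero t hp.ne_zero)]

omit [Fintype F] in
lemma galois_map_mul_transpose (f : F → F) {a b n : ℕ}
    (A : Matrix (Fin a) (Fin n) F) (B : Matrix (Fin b) (Fin n) F) :
    (A.map f) * B.transpose = 0 ↔ B * (A.transpose.map f) = 0 := by
  have hBA : B * (A.transpose.map f) = ((A.map f) * B.transpose).transpose := by
    rw [Matrix.transpose_mul, Matrix.transpose_transpose, Matrix.transpose_map]
  rw [hBA, Matrix.transpose_eq_zero]

end GaloisAux4


/-- Corollary: for any generator matrix `G` and parity check matrix `H` of the `k`-dimensional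
code `C`, the following are equivalent: (1) `C` is `e`-Galois self-dual; (2) `C` is
`(h-e)`-Galois self-dual; (3) `G·σ^e(Gᵀ) = 0` and `σ^{h-e}(H)·σ^{2h-2e}(Hᵀ) = 0`;
(4) `G·σ^e(Gᵀ) = 0` and `σ^{h-e}(H)·Hᵀ = 0`; (5) `G·σ^{h-e}(Gᵀ) = 0` and
`σ^{h-e}(H)·σ^{2h-2e}(Hᵀ) = 0`; (6) `G·σ^{h-e}(Gᵀ) = 0` and `σ^{h-e}(H)·Hᵀ = 0`. -/
theorem galois_selfDual_tfae
    (p h : ℕ) (hp : p.Prime) (hh : 0 < h)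
    [Field F] [Fintype F] (hcard : Fintype.card F = p ^ h)
    (n k e : ℕ) (he : e ≤ h - 1)
    (C : Submodule F (Fin n → F)) (hk : Module.finrank F C = k)
    (G : Matrix (Fin k) (Fin n) F) (hG : IsGenMatrix C G)
    (H : Matrix (Fin (n - k)) (Fin n) F) (hH : IsGenMatrix (galoisDual p 0 C) H) :
    List.TFAE
      [C = galoisDual p e C,
       C = galoisDual p (h - e) C,
       G * (G.transpose.map fun a => a ^ p ^ e) = 0 ∧
         (H.map fun a => a ^ p ^ (h - e)) *
           (H.transpose.map fun a => a ^ p ^ (2 * h - 2 * e)) = 0,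
       G * (G.transpose.map fun a => a ^ p ^ e) = 0 ∧
         (H.map fun a => a ^ p ^ (h - e)) * H.transpose = 0,
       G * (G.transpose.map fun a => a ^ p ^ (h - e)) = 0 ∧
         (H.map fun a => a ^ p ^ (h - e)) *
           (H.transpose.map fun a => a ^ p ^ (2 * h - 2 * e)) = 0,
       G * (G.transpose.map fun a => a ^ p ^ (h - e)) = 0 ∧
         (H.map fun a => a ^ p ^ (h - e)) * H.transpose = 0] := by
  have heh : e ≤ h := le_trans he (Nat.sub_le h 1)
  have hhe : h - (h - e) = e := Nat.sub_sub_self heh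
  set D : Submodule F (Fin n → F) := galoisDual p 0 C with hD
  -- swap equivalences
  have hCe : (C ≤ galoisDual p (h - e) C) ↔ (C ≤ galoisDual p e C) := by
    constructor
    · intro hle
      have := galois_le_dual_swap hp hh hcard (Nat.sub_le h e) hle
      rwa [hhe] at this
    · intro hle
      exact galois_le_dual_swap hp hh hcard heh hle
  have hDe : (D ≤ galoisDual p e D) ↔ (D ≤ galoisDual p (h - e) D) := by
    constructor
    · intro hle
      exact galois_le_dual_swap hp hh hcard heh hle
    · intro hle
      have := galois_le_dual_swap hp hh hcard (Nat.sub_le h e) hle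
      rwa [hhe] at this
  -- the two main conditions
  have E1 : (C = galoisDual p e C) ↔
      (C ≤ galoisDual p e C ∧ D ≤ galoisDual p (h - e) D) :=
    galois_selfdual_iff hp hh hcard heh hk G hG H hH
  have E2 : (C = galoisDual p (h - e) C) ↔
      (C ≤ galoisDual p e C ∧ D ≤ galoisDual p (h - e) D) := by
    have h0 := galois_selfdual_iff hp hh hcard (Nat.sub_le h e) hk G hG H hH
    rw [hhe] at h0
    exact h0.trans (and_congr hCe hDe)
  have E3a : (G * (G.transpose.map fun a => a ^ p ^ e) = 0) ↔ C ≤ galoisDual p e C :=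
    (galois_le_dual_iff hp hh hcard hG.2 hG.2 e).symm
  have E5a : (G * (G.transpose.map fun a => a ^ p ^ (h - e)) = 0) ↔
      C ≤ galoisDual p e C :=
    ((galois_le_dual_iff hp hh hcard hG.2 hG.2 (h - e)).symm).trans hCe
  have EHb : (H * (H.transpose.map fun a => a ^ p ^ (h - e)) = 0) ↔
      D ≤ galoisDual p (h - e) D :=
    (galois_le_dual_iff hp hh hcard hH.2 hH.2 (h - e)).symm
  have E4b : ((H.map fun a => a ^ p ^ (h - e)) * H.transpose = 0) ↔
      D ≤ galoisDual p (h - e) D :=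
    (galois_map_mul_transpose _ H H).trans EHb
  have E3b : ((H.map fun a => a ^ p ^ (h - e)) *
      (H.transpose.map fun a => a ^ p ^ (2 * h - 2 * e)) = 0) ↔
      D ≤ galoisDual p (h - e) D := by
    have hmm : (H.transpose.map fun a => a ^ p ^ (2 * h - 2 * e)) =
        ((H.transpose.map fun a => a ^ p ^ (h - e)).map fun a => a ^ p ^ (h - e)) := by
      have hexp : p ^ (2 * h - 2 * e) = p ^ (h - e) * p ^ (h - e) := by
        rw [← pow_add]
        congr 1
        omega
      have hfun : (fun a : F => a ^ p ^ (2 * h - 2 * e)) =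
          ((fun a : F => a ^ p ^ (h - e)) ∘ fun a : F => a ^ p ^ (h - e)) := by
        funext x
        simp only [Function.comp_apply]
        rw [hexp, pow_mul]
      rw [Matrix.map_map, hfun]
    rw [hmm,
      galois_map_mul_zero_iff hp hh hcard (h - e) H (H.transpose.map fun a => a ^ p ^ (h - e))]
    exact EHb
  tfae_have 1 ↔ 4 := E1.trans (and_congr E3a E4b).symm
  tfae_have 2 ↔ 4 := E2.trans (and_congr E3a E4b).symm
  tfae_have 3 ↔ 4 := and_congr Iff.rfl (E3b.trans E4b.symm)
  tfae_have 5 ↔ 4 := and_congr (E5a.trans E3a.symm) (E3b.trans E4b.symm)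
  tfae_have 6 ↔ 4 := and_congr (E5a.trans E3a.symm) Iff.rfl
  tfae_finish
end
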